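/- Let T be a C² solution of ρCₚ u·∇T − kΔT = 0 in Ω with divergence-free u vanishing on ∂Ω, satisfying Robin conditions −k∂T/∂n = h_i(T − c_i) on boundary pieces Γ_i with h_i > 0. Then min_i c_i ≤ T ≤ max_i c_i in Ω. -/

import Mathlib

open MeasureTheory Real Set
open Filter Topology

/-- Partial derivative in direction `i`. -/
noncomputable def pd (f : (Fin 3 → ℝ) → ℝ) (i : Fin 3) (x : Fin 3 → ℝ) : ℝ :=
  fderiv ℝ f x (Pi.single i 1)

/-- Divergence of a vector field on `ℝ³`. -/
noncomputable def vdiv (u : (Fin 3 → ℝ) → (Fin 3 → ℝ)) (x : Fin 3 → ℝ) : ℝ :=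
  ∑ i, pd (fun y => u y i) i x

/-- Laplacian of a scalar field on `ℝ³`. -/
noncomputable def lap (f : (Fin 3 → ℝ) → ℝ) (x : Fin 3 → ℝ) : ℝ :=
  ∑ i, pd (pd f i) i x

/-- Euclidean norm of a vector in `ℝ³`. -/
noncomputable def enorm3 (g : Fin 3 → ℝ) : ℝ := Real.sqrt (∑ i, g i ^ 2)

/-- `n` is a unit outward-pointing normal field on the boundary of `Ω`. -/
def IsOutwardNormal (Ω : Set (Fin 3 → ℝ)) (n : (Fin 3 → ℝ) → (Fin 3 → ℝ)) : Prop :=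
  ∀ x ∈ frontier Ω, enorm3 (n x) = 1 ∧
    ∃ ε > 0, ∀ t ∈ Set.Ioo (0:ℝ) ε, x + t • n x ∉ closure Ω ∧ x - t • n x ∈ Ω

set_option maxHeartbeats 1000000

lemma clm_sum (L : (Fin 3 → ℝ) →L[ℝ] ℝ) (v : Fin 3 → ℝ) :
    L v = ∑ j, v j * L (Pi.single j 1) := by
  have hv : v = ∑ j, v j • (Pi.single j 1 : Fin 3 → ℝ) := by
    funext kk
    simp [Finset.sum_apply, Pi.single_apply]
  conv_lhs => rw [hv]
  rw [map_sum]
  simp [smul_eq_mul]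



lemma L1 {f : ℝ → ℝ} {a ε : ℝ} (hε : 0 < ε) (hf : HasDerivAt f a 0)
    (hmax : ∀ t ∈ Ioo (0:ℝ) ε, f t ≤ f 0) : a ≤ 0 := by
  have h := hasDerivAt_iff_tendsto_slope.1 hf
  have h2 : Tendsto (slope f 0) (𝓝[>] 0) (𝓝 a) :=
    h.mono_left (nhdsWithin_mono _ (fun t ht => ne_of_gt ht))
  refine le_of_tendsto h2 ?_
  filter_upwards [Ioo_mem_nhdsGT_of_mem ⟨le_refl 0, hε⟩] with t ht
  have h3 := hmax t ht
  have ht0 : (0:ℝ) < t := ht.1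
  rw [slope_def_field]
  apply div_nonpos_of_nonpos_of_nonneg <;> linarith


lemma L2 {f f' : ℝ → ℝ} {δ q : ℝ} (hδ : 0 < δ)
    (hf : ∀ t ∈ Ioo (-δ) δ, HasDerivAt f (f' t) t)
    (hf' : HasDerivAt f' q 0)
    (hmax : ∀ t ∈ Ioo (-δ) δ, f t ≤ f 0) : q ≤ 0 := by
  have h0 : (0:ℝ) ∈ Ioo (-δ) δ := ⟨by linarith, hδ⟩
  have hloc : IsLocalMax f 0 := by
    have : Ioo (-δ) δ ∈ 𝓝 (0:ℝ) := Ioo_mem_nhds h0.1 h0.2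
    filter_upwards [this] with t ht using hmax t ht
  have hf'0 : f' 0 = 0 := hloc.hasDerivAt_eq_zero (hf 0 h0)
  by_contra hq
  push_neg at hq
  -- f' t > 0 for small t > 0
  have hs := hasDerivAt_iff_tendsto_slope.1 hf'
  have h2 : Tendsto (slope f' 0) (𝓝[>] 0) (𝓝 q) :=
    hs.mono_left (nhdsWithin_mono _ (fun t ht => ne_of_gt ht))
  have hev : ∀ᶠ t in 𝓝[>] (0:ℝ), 0 < slope f' 0 t := h2.eventually (eventually_gt_nhds hq)
  rw [eventually_nhdsWithin_iff] at hev
  obtain ⟨s, hs1, hs2⟩ := eventually_nhds_iff.1 hev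
  obtain ⟨r, hr, hrs⟩ := Metric.mem_nhds_iff.1 (hs2.1.mem_nhds hs2.2)
  set b := min (r/2) (δ/2) with hb
  have hbpos : 0 < b := lt_min (by linarith) (by linarith)
  have hbδ : b < δ := lt_of_le_of_lt (min_le_right _ _) (by linarith)
  have hpos : ∀ t ∈ Ioo (0:ℝ) b, 0 < f' t := by
    intro t ht
    have hts : t ∈ s := hrs (by
      simp [Metric.mem_ball, Real.dist_eq, abs_of_pos ht.1]
      calc t < b := ht.2
        _ ≤ r/2 := min_le_left _ _
        _ < r := by linarith)
    have h4 := hs1 t hts ht.1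
    rw [slope_def_field, hf'0, sub_zero, sub_zero] at h4
    rcases div_pos_iff.1 h4 with ⟨h5, _⟩ | ⟨_, h6⟩
    · exact h5
    · linarith [ht.1]
  have hmono : StrictMonoOn f (Icc 0 b) := by
    apply strictMonoOn_of_deriv_pos (convex_Icc _ _)
    · intro t ht
      have htI : t ∈ Ioo (-δ) δ := ⟨by linarith [ht.1], lt_of_le_of_lt ht.2 hbδ⟩
      exact ((hf t htI).continuousAt).continuousWithinAt
    · intro t ht
      rw [interior_Icc] at ht
      have htI : t ∈ Ioo (-δ) δ := ⟨by linarith [ht.1], lt_of_lt_of_le (lt_of_lt_of_le ht.2 le_rfl) hbδ.le⟩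
      rw [(hf t htI).deriv]
      exact hpos t ht
  have : f 0 < f b := hmono ⟨le_rfl, hbpos.le⟩ ⟨hbpos.le, le_rfl⟩ hbpos
  have : f b ≤ f 0 := hmax b ⟨by linarith, hbδ⟩
  linarith

lemma aux_upper (Ω : Set (Fin 3 → ℝ)) (hΩo : IsOpen Ω) (hΩb : Bornology.IsBounded Ω)
    {N : ℕ} [NeZero N] (Γ : Fin N → Set (Fin 3 → ℝ))
    (hcover : (⋃ i, Γ i) = frontier Ω)
    (ρ Cp k : ℝ) (hρ : 0 < ρ) (hCp : 0 < Cp) (hk : 0 < k)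
    (h c : Fin N → ℝ) (hh : ∀ i, 0 < h i)
    (n : (Fin 3 → ℝ) → (Fin 3 → ℝ)) (hn : IsOutwardNormal Ω n)
    (u : (Fin 3 → ℝ) → (Fin 3 → ℝ)) (hu : Continuous u)
    (T : (Fin 3 → ℝ) → ℝ) (hT : ContDiffOn ℝ 2 T Ω) (hTc : ContinuousOn T (closure Ω))
    (heq : ∀ x ∈ Ω, ρ * Cp * (∑ j, u x j * pd T j x) - k * lap T x = 0)
    (hRobin : ∀ i, ∀ x ∈ Γ i, -(k * ∑ j, n x j * pd T j x) = h i * (T x - c i))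
    (b : ℝ) (hb : ∀ i, c i ≤ b) :
    ∀ y ∈ closure Ω, T y ≤ b := by
  intro y hy
  have : Nonempty (Fin N) := ⟨⟨0, Nat.pos_of_ne_zero (NeZero.ne N)⟩⟩
  -- compact closure
  have hK : IsCompact (closure Ω) := hΩb.isCompact_closure
  have hKne : (closure Ω).Nonempty := ⟨y, hy⟩
  -- bound on u 0
  obtain ⟨M0, hM0⟩ := hK.exists_bound_of_continuousOn (hu.continuousOn (s := closure Ω))
  set M : ℝ := max M0 0 with hM
  have hMnn : 0 ≤ M := le_max_right _ _
  have hMu : ∀ x ∈ closure Ω, u x 0 ≤ M := by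
    intro x hx
    calc u x 0 ≤ |u x 0| := le_abs_self _
      _ ≤ ‖u x‖ := norm_le_pi_norm (u x) 0
      _ ≤ M0 := hM0 x hx
      _ ≤ M := le_max_left _ _
  -- the exponent
  set l : ℝ := (ρ * Cp * M + 1) / k with hl
  have hlpos : 0 < l := by positivity
  have hkl : k * l = ρ * Cp * M + 1 := by
    rw [hl]
    field_simp
  -- bound on coordinates
  obtain ⟨R0, hR0⟩ := hK.exists_bound_of_continuousOn (continuous_id.continuousOn (s := closure Ω))
  set G : ℝ := Real.exp (l * R0) with hG
  have hGpos : 0 < G := Real.exp_pos _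
  -- the linear functional and g
  set L : (Fin 3 → ℝ) →L[ℝ] ℝ := l • (ContinuousLinearMap.proj 0) with hLdef
  have hLx : ∀ x : Fin 3 → ℝ, L x = l * x 0 := by
    intro x; simp [hLdef]
  set g : (Fin 3 → ℝ) → ℝ := fun x => Real.exp (L x) with hgdef
  have hgpos : ∀ x, 0 < g x := fun x => Real.exp_pos _
  have hgd : ∀ x, HasFDerivAt g (g x • L) x := by
    intro x
    exact (Real.hasDerivAt_exp (L x)).comp_hasFDerivAt x L.hasFDerivAt
  have hgB : ∀ x ∈ closure Ω, g x ≤ G := by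
    intro x hx
    apply Real.exp_le_exp.2
    rw [hLx]
    have h1 : x 0 ≤ R0 := by
      calc x 0 ≤ |x 0| := le_abs_self _
        _ ≤ ‖x‖ := norm_le_pi_norm x 0
        _ ≤ R0 := hR0 x hx
    nlinarith [hlpos.le]
  -- coefficients a j
  set a : Fin 3 → ℝ := fun j => L (Pi.single j 1) with ha
  have ha0 : a 0 = l := by simp [ha, hLdef]
  have ha1 : a 1 = 0 := by simp [ha, hLdef, Pi.single_apply]
  have ha2 : a 2 = 0 := by simp [ha, hLdef, Pi.single_apply]
  have hasq : ∑ j, (a j)^2 = l^2 := by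
    rw [Fin.sum_univ_three, ha0, ha1, ha2]; ring
  -- min of h
  set hm : ℝ := Finset.univ.inf' Finset.univ_nonempty h with hhm
  have hmpos : 0 < hm := by
    rw [hhm]
    apply (Finset.lt_inf'_iff _).2
    intro i _
    exact hh i
  have hmle : ∀ i, hm ≤ h i := fun i => Finset.inf'_le _ (Finset.mem_univ i)
  -- main estimate with ε
  have key : ∀ ε : ℝ, 0 < ε → T y ≤ b + ε * (k * l * G / hm + G) := by
    intro ε hε
    set φ : (Fin 3 → ℝ) → ℝ := fun x => T x + ε * g x with hφ
    have hφc : ContinuousOn φ (closure Ω) :=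
      hTc.add ((continuous_const.mul (Real.continuous_exp.comp L.continuous)).continuousOn)
    obtain ⟨x₀, hx₀K, hx₀max⟩ := hK.exists_isMaxOn hKne hφc
    have hmax : ∀ z ∈ closure Ω, φ z ≤ φ x₀ := hx₀max
    -- interior contradiction
    have hx₀Ω : x₀ ∉ Ω := by
      intro hin
      have hloc : IsLocalMax φ x₀ :=
        hx₀max.isLocalMax (Filter.mem_of_superset (hΩo.mem_nhds hin) subset_closure)
      have hTd : ∀ x ∈ Ω, DifferentiableAt ℝ T x := fun x hx =>
        (hT.differentiableOn (by norm_num)).differentiableAt (hΩo.mem_nhds hx)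
      have hF : ContDiffOn ℝ 1 (fderiv ℝ T) Ω := hT.fderiv_of_isOpen hΩo (by norm_num)
      have hpdTd : ∀ j : Fin 3, ∀ x ∈ Ω, DifferentiableAt ℝ (pd T j) x := by
        intro j x hx
        have h2 : DifferentiableAt ℝ (fderiv ℝ T) x :=
          ((hF.differentiableOn (by norm_num)).differentiableAt (hΩo.mem_nhds hx))
        exact h2.clm_apply (differentiableAt_const _)
      have hφd : ∀ x ∈ Ω, HasFDerivAt φ (fderiv ℝ T x + ε • (g x • L)) x := fun x hx =>
        ((hTd x hx).hasFDerivAt).add ((hgd x).const_smul ε)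
      have hgrad0 : fderiv ℝ φ x₀ = 0 := hloc.fderiv_eq_zero
      have hfd0 : fderiv ℝ T x₀ + ε • (g x₀ • L) = 0 := by
        rw [← (hφd x₀ hin).fderiv, hgrad0]
      have hpdT0 : ∀ j : Fin 3, pd T j x₀ = -(ε * (g x₀ * a j)) := by
        intro j
        have h3 := congrArg (fun D : (Fin 3 → ℝ) →L[ℝ] ℝ => D (Pi.single j 1)) hfd0
        simp only [ContinuousLinearMap.add_apply, ContinuousLinearMap.smul_apply,
          ContinuousLinearMap.zero_apply, smul_eq_mul] at h3
        rw [pd]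
        have h3' : a j = L (Pi.single j 1) := rfl
        rw [h3']
        linarith [h3]
      -- second derivative test in each direction
      have hsec : ∀ j : Fin 3, pd (pd T j) j x₀ ≤ -(ε * ((a j)^2 * g x₀)) := by
        intro j
        obtain ⟨r, hr, hball⟩ := Metric.isOpen_iff.1 hΩo x₀ hin
        set e : Fin 3 → ℝ := Pi.single j 1 with he'
        have hene : ‖e‖ = 1 := by rw [he', Pi.norm_single]; norm_num
        set A : ℝ → (Fin 3 → ℝ) := fun t => x₀ + t • e with hA
        have hA0 : A 0 = x₀ := by simp [hA]
        have hAmem : ∀ t ∈ Ioo (-r) r, A t ∈ Ω := by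
          intro t ht
          apply hball
          rw [Metric.mem_ball, dist_eq_norm]
          have : A t - x₀ = t • e := by simp [hA]
          rw [this, norm_smul, hene]
          simpa using abs_lt.2 ⟨ht.1, ht.2⟩
        have hAd : ∀ t : ℝ, HasDerivAt A e t := by
          intro t
          have h1 := ((hasDerivAt_id t).smul_const e).const_add x₀
          rw [one_smul] at h1
          exact h1
        have hDf : ∀ t ∈ Ioo (-r) r, HasDerivAt (φ ∘ A) ((fun s => pd φ j (A s)) t) t := by
          intro t ht
          have h1 := hφd (A t) (hAmem t ht)
          have h2 := h1.comp_hasDerivAt t (hAd t)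
          have h3 : pd φ j (A t) = (fderiv ℝ T (A t) + ε • (g (A t) • L)) e := by
            rw [pd, h1.fderiv]
          rw [show (fun s => pd φ j (A s)) t = pd φ j (A t) from rfl, h3]
          exact h2
        set p : (Fin 3 → ℝ) → ℝ := fun x => pd T j x + (ε * a j) • g x with hp
        have hEq : (pd φ j) =ᶠ[𝓝 x₀] p := by
          filter_upwards [hΩo.mem_nhds hin] with x hx
          show pd φ j x = pd T j x + (ε * a j) • g x
          rw [pd, (hφd x hx).fderiv]
          simp only [ContinuousLinearMap.add_apply, ContinuousLinearMap.smul_apply,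
            smul_eq_mul]
          rw [show L (Pi.single j 1) = a j from rfl,
            show pd T j x = fderiv ℝ T x (Pi.single j 1) from rfl]
          ring
        have hpd : HasFDerivAt p
            (fderiv ℝ (pd T j) x₀ + (ε * a j) • (g x₀ • L)) x₀ :=
          ((hpdTd j x₀ hin).hasFDerivAt).add ((hgd x₀).const_smul (ε * a j))
        have hφd' : HasFDerivAt (pd φ j)
            (fderiv ℝ (pd T j) x₀ + (ε * a j) • (g x₀ • L)) x₀ :=
          hpd.congr_of_eventuallyEq hEq
        have hDf' : HasDerivAt (fun s => pd φ j (A s))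
            ((fderiv ℝ (pd T j) x₀ + (ε * a j) • (g x₀ • L)) e) 0 := by
          have h4 : HasFDerivAt (pd φ j)
              (fderiv ℝ (pd T j) x₀ + (ε * a j) • (g x₀ • L)) (A 0) := by
            rw [hA0]; exact hφd'
          exact h4.comp_hasDerivAt 0 (hAd 0)
        have hmaxline : ∀ t ∈ Ioo (-r) r, (φ ∘ A) t ≤ (φ ∘ A) 0 := by
          intro t ht
          have := hmax (A t) (subset_closure (hAmem t ht))
          simpa [hA0] using this
        have hq2 := L2 hr hDf hDf' hmaxline
        have h5 : (fderiv ℝ (pd T j) x₀ + (ε * a j) • (g x₀ • L)) e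
            = pd (pd T j) j x₀ + ε * a j * (g x₀ * a j) := by
          simp only [ContinuousLinearMap.add_apply, ContinuousLinearMap.smul_apply,
            smul_eq_mul]
          rw [show L e = a j from rfl,
            show pd (pd T j) j x₀ = fderiv ℝ (pd T j) x₀ e from rfl]
        rw [h5] at hq2
        nlinarith [hq2]
      -- combine with the PDE
      have hlapb : lap T x₀ ≤ -(ε * (l^2 * g x₀)) := by
        rw [lap]
        calc ∑ j, pd (pd T j) j x₀ ≤ ∑ j, -(ε * ((a j)^2 * g x₀)) :=
              Finset.sum_le_sum (fun j _ => hsec j)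
          _ = -(ε * (l^2 * g x₀)) := by
              rw [Fin.sum_univ_three, ha0, ha1, ha2]; ring
      have hgrad : ∑ j, u x₀ j * pd T j x₀ = -(ε * (g x₀ * (l * u x₀ 0))) := by
        simp only [hpdT0]
        rw [Fin.sum_univ_three, ha0, ha1, ha2]; ring
      have he2 := heq x₀ hin
      rw [hgrad] at he2
      have hu0 : u x₀ 0 ≤ M := hMu x₀ (subset_closure hin)
      have hP : 0 < ε * g x₀ * l := by positivity
      nlinarith [mul_le_mul_of_nonneg_left hlapb hk.le,
        mul_nonneg (mul_nonneg (mul_pos hρ hCp).le hP.le) (sub_nonneg.2 hu0)]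
    -- boundary case
    have hx₀F : x₀ ∈ frontier Ω := by
      constructor
      · exact hx₀K
      · rwa [hΩo.interior_eq]
    obtain ⟨i, hx₀Γ⟩ : ∃ i, x₀ ∈ Γ i := by
      rw [← hcover] at hx₀F
      exact mem_iUnion.1 hx₀F
    have hx₀K' : x₀ ∈ closure Ω := hx₀K
    -- bound T x₀
    have hbx : T x₀ ≤ c i + ε * (k * l * G / hm) := by
      by_cases hd : DifferentiableAt ℝ T x₀
      · obtain ⟨hnorm, εn, hεn, hmem⟩ := hn x₀ hx₀F
        have hn0 : n x₀ 0 ≤ 1 := by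
          have hsq : ∑ j, (n x₀ j)^2 = 1 := by
            have h7 := hnorm
            rw [enorm3] at h7
            nlinarith [Real.sq_sqrt (show (0:ℝ) ≤ ∑ j, (n x₀ j)^2 by positivity), h7]
          rw [Fin.sum_univ_three] at hsq
          nlinarith [hsq]
        have hφd0 : HasFDerivAt φ (fderiv ℝ T x₀ + ε • (g x₀ • L)) x₀ :=
          (hd.hasFDerivAt).add ((hgd x₀).const_smul ε)
        set A : ℝ → (Fin 3 → ℝ) := fun t => x₀ + t • (-(n x₀)) with hA
        have hA0 : A 0 = x₀ := by simp [hA]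
        have hAd : HasDerivAt A (-(n x₀)) 0 := by
          have h1 := ((hasDerivAt_id (0:ℝ)).smul_const (-(n x₀))).const_add x₀
          rw [one_smul] at h1
          exact h1
        have hψ : HasDerivAt (φ ∘ A)
            ((fderiv ℝ T x₀ + ε • (g x₀ • L)) (-(n x₀))) 0 := by
          have h8 : HasFDerivAt φ (fderiv ℝ T x₀ + ε • (g x₀ • L)) (A 0) := by
            rw [hA0]; exact hφd0
          exact h8.comp_hasDerivAt 0 hAd
        have hmaxline : ∀ t ∈ Ioo (0:ℝ) εn, (φ ∘ A) t ≤ (φ ∘ A) 0 := by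
          intro t ht
          have h9 := (hmem t ht).2
          have hAt : A t = x₀ - t • n x₀ := by
            simp [hA, sub_eq_add_neg, smul_neg]
          rw [Function.comp_apply, Function.comp_apply, hA0, hAt]
          exact hmax _ (subset_closure h9)
        have hD1 := L1 hεn hψ hmaxline
        rw [map_neg] at hD1
        have hD2 : 0 ≤ (fderiv ℝ T x₀ + ε • (g x₀ • L)) (n x₀) := by linarith
        have hDval : (fderiv ℝ T x₀ + ε • (g x₀ • L)) (n x₀)
            = fderiv ℝ T x₀ (n x₀) + ε * (g x₀ * (l * n x₀ 0)) := by
          simp only [ContinuousLinearMap.add_apply, ContinuousLinearMap.smul_apply,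
            smul_eq_mul]
          rw [hLx]
        rw [hDval] at hD2
        have hsum : ∑ j, n x₀ j * pd T j x₀ = fderiv ℝ T x₀ (n x₀) :=
          (clm_sum (fderiv ℝ T x₀) (n x₀)).symm
        have hr := hRobin i x₀ hx₀Γ
        rw [hsum] at hr
        -- fderiv T x₀ (n x₀) ≥ -ε G l
        have hgb := hgB x₀ hx₀K'
        have hgp := hgpos x₀
        have h10 : ε * (g x₀ * (l * n x₀ 0)) ≤ ε * (G * l) := by
          nlinarith [mul_nonneg (mul_nonneg hε.le (mul_nonneg hgp.le hlpos.le))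
              (sub_nonneg.2 hn0),
            mul_nonneg (mul_nonneg hε.le hlpos.le) (sub_nonneg.2 hgb)]
        have h11 : h i * (T x₀ - c i) ≤ ε * (k * l * G) := by
          have hF : -(fderiv ℝ T x₀ (n x₀)) ≤ ε * (G * l) := by linarith
          have hkF := mul_le_mul_of_nonneg_left hF hk.le
          calc h i * (T x₀ - c i) = k * -(fderiv ℝ T x₀ (n x₀)) := by linarith [hr]
            _ ≤ k * (ε * (G * l)) := hkF
            _ = ε * (k * l * G) := by ring
        have h12 : hm * (T x₀ - c i) ≤ ε * (k * l * G) := by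
          rcases le_or_gt (T x₀ - c i) 0 with h13 | h13
          · have : hm * (T x₀ - c i) ≤ 0 := mul_nonpos_of_nonneg_of_nonpos hmpos.le h13
            have h14 : (0:ℝ) ≤ ε * (k * l * G) := by positivity
            linarith
          · calc hm * (T x₀ - c i) ≤ h i * (T x₀ - c i) :=
                  mul_le_mul_of_nonneg_right (hmle i) h13.le
              _ ≤ ε * (k * l * G) := h11
        have h15 : T x₀ - c i ≤ ε * (k * l * G) / hm := by
          rw [le_div_iff₀ hmpos]
          linarith [h12]
        have h16 : ε * (k * l * G) / hm = ε * (k * l * G / hm) := by ring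
        linarith [h15, h16.le]
      · have hz : ∀ j : Fin 3, pd T j x₀ = 0 := by
          intro j
          rw [pd, fderiv_zero_of_not_differentiableAt hd]
          rfl
        have hr := hRobin i x₀ hx₀Γ
        simp only [hz, mul_zero, Finset.sum_const_zero, neg_zero] at hr
        have h17 : T x₀ = c i := by
          have := hh i
          have h18 : T x₀ - c i = 0 := by
            rcases mul_eq_zero.1 hr.symm with h19 | h19
            · linarith
            · exact h19
          linarith
        have h20 : (0:ℝ) ≤ ε * (k * l * G / hm) := by positivity
        linarith
    -- combine
    have h21 : T y + ε * g y ≤ T x₀ + ε * g x₀ := hmax y hy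
    have h22 : ε * g x₀ ≤ ε * G :=
      mul_le_mul_of_nonneg_left (hgB x₀ hx₀K') hε.le
    have h23 : 0 < ε * g y := by positivity
    have h24 := hb i
    have h25 : ε * (k * l * G / hm) + ε * G = ε * (k * l * G / hm + G) := by ring
    linarith
  -- conclude
  by_contra hcon
  push_neg at hcon
  set C : ℝ := k * l * G / hm + G with hC
  have hCpos : 0 < C := by positivity
  have h5 := key ((T y - b) / (2 * C)) (div_pos (by linarith) (by positivity))
  have h6 : (T y - b) / (2 * C) * C = (T y - b) / 2 := by
    field_simp
  rw [h6] at h5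
  linarith

lemma pd_neg (f : (Fin 3 → ℝ) → ℝ) (j : Fin 3) (x : Fin 3 → ℝ) :
    pd (fun y => -f y) j x = -(pd f j x) := by
  rw [pd, pd, fderiv_fun_neg]
  simp

lemma lap_neg (f : (Fin 3 → ℝ) → ℝ) (x : Fin 3 → ℝ) :
    lap (fun y => -f y) x = -(lap f x) := by
  rw [lap, lap, ← Finset.sum_neg_distrib]
  apply Finset.sum_congr rfl
  intro j _
  have h1 : pd (fun y => -f y) j = fun y => -(pd f j y) := funext (pd_neg f j)
  rw [h1, pd_neg]


/-- comparison principle for the coupled heat-flow model with Robin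
boundary conditions towards reference temperatures c i. -/
theorem stmt_12 (Ω : Set (Fin 3 → ℝ)) (hΩo : IsOpen Ω) (hΩb : Bornology.IsBounded Ω)
    (N : ℕ) [NeZero N] (Γ : Fin N → Set (Fin 3 → ℝ))
    (hcover : (⋃ i, Γ i) = frontier Ω)
    (hdisj : ∀ i j, i ≠ j → Disjoint (Γ i) (Γ j))
    (ρ Cp k : ℝ) (hρ : 0 < ρ) (hCp : 0 < Cp) (hk : 0 < k)
    (h c : Fin N → ℝ) (hh : ∀ i, 0 < h i)
    (n : (Fin 3 → ℝ) → (Fin 3 → ℝ)) (hn : IsOutwardNormal Ω n)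
    (u : (Fin 3 → ℝ) → (Fin 3 → ℝ)) (hu : ContDiff ℝ 1 u)
    (hdiv : ∀ x ∈ Ω, vdiv u x = 0) (hbc : ∀ x ∈ frontier Ω, u x = 0)
    (T : (Fin 3 → ℝ) → ℝ) (hT : ContDiffOn ℝ 2 T Ω) (hT1 : ContDiffOn ℝ 1 T (closure Ω))
    (heq : ∀ x ∈ Ω, ρ * Cp * (∑ j, u x j * pd T j x) - k * lap T x = 0)
    (hRobin : ∀ i, ∀ x ∈ Γ i, -(k * ∑ j, n x j * pd T j x) = h i * (T x - c i)) :
    ∀ x ∈ closure Ω, (⨅ i, c i) ≤ T x ∧ T x ≤ ⨆ i, c i := by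
  have : Nonempty (Fin N) := ⟨⟨0, Nat.pos_of_ne_zero (NeZero.ne N)⟩⟩
  intro x hx
  constructor
  · -- lower bound via -T
    have hneg := aux_upper Ω hΩo hΩb Γ hcover ρ Cp k hρ hCp hk h (fun i => -c i) hh n hn
      u hu.continuous (fun y => -T y) hT.neg (hT1.continuousOn.neg)
      (by
        intro z hz
        have h1 := heq z hz
        have h2 : ∑ j, u z j * pd (fun y => -T y) j z = -∑ j, u z j * pd T j z := by
          simp [pd_neg, mul_neg]
        rw [h2, lap_neg]
        ring_nf
        ring_nf at h1
        linarith)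
      (by
        intro i z hz
        have h1 := hRobin i z hz
        have h2 : ∑ j, n z j * pd (fun y => -T y) j z = -∑ j, n z j * pd T j z := by
          simp [pd_neg, mul_neg]
        rw [h2]
        ring_nf
        ring_nf at h1
        linarith)
      (-(⨅ i, c i))
      (fun i => neg_le_neg (ciInf_le (Set.Finite.bddBelow (Set.finite_range c)) i))
      x hx
    have hneg' : -T x ≤ -⨅ i, c i := hneg
    linarith
  · exact aux_upper Ω hΩo hΩb Γ hcover ρ Cp k hρ hCp hk h c hh n hn u hu.continuous
      T hT hT1.continuousOn heq hRobin (⨆ i, c i)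
      (fun i => le_ciSup (Set.Finite.bddAbove (Set.finite_range c)) i) x hx
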